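/- Let n be a natural number with n ≤ 8 and let S ⊆ ℤ² be periodic with N_S(x) ≤ n for every x ∈ S. Then S has density exactly 8/(16 − n) if and only if N_S(y) = 8 for every y ∉ S (i.e. no two elements of ℤ² \ S are neighbors) and N_S(x) = n for every x ∈ S. -/

import Mathlib

open Filter Topology

/-- `y` is a neighbor of `x` in the 8-point (Moore) neighborhood of `ℤ²`. -/
def IsNbr (x y : ℤ × ℤ) : Prop :=
  y ≠ x ∧ |y.1 - x.1| ≤ 1 ∧ |y.2 - x.2| ≤ 1

/-- `N_S(x)`: the number of neighbors of `x` lying in `S`. -/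
noncomputable def nbrCount (S : Set (ℤ × ℤ)) (x : ℤ × ℤ) : ℕ :=
  Set.ncard {y ∈ S | IsNbr x y}

/-- The box `B_r = {x : |x₁| < r, |x₂| < r}`. -/
def box (r : ℕ) : Set (ℤ × ℤ) :=
  {x | |x.1| < (r : ℤ) ∧ |x.2| < (r : ℤ)}

/-- `S` has density `d`: the sequence `|S ∩ B_r| / (2r-1)²` tends to `d`. -/
def HasDensity (S : Set (ℤ × ℤ)) (d : ℝ) : Prop :=
  Tendsto (fun r : ℕ => (Set.ncard (S ∩ box r) : ℝ) / (2 * (r : ℝ) - 1) ^ 2) atTop (𝓝 d)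

/-- `S ⊆ ℤ²` is periodic: invariant under two independent positive translations. -/
def Periodic (S : Set (ℤ × ℤ)) : Prop :=
  ∃ p q : ℤ, 0 < p ∧ 0 < q ∧
    (∀ x : ℤ × ℤ, x ∈ S ↔ (x.1 + p, x.2) ∈ S) ∧
    (∀ x : ℤ × ℤ, x ∈ S ↔ (x.1, x.2 + q) ∈ S)

attribute [local instance] Classical.propDecidable


noncomputable def nbrF (x : ℤ × ℤ) : Finset (ℤ × ℤ) :=
  ((Finset.Icc (x.1 - 1) (x.1 + 1)) ×ˢ (Finset.Icc (x.2 - 1) (x.2 + 1))).erase x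

lemma mem_nbrF {x y : ℤ × ℤ} : y ∈ nbrF x ↔ IsNbr x y := by
  simp only [nbrF, IsNbr, Finset.mem_erase, Finset.mem_product, Finset.mem_Icc, abs_le]
  constructor
  · rintro ⟨h1, ⟨h2, h3⟩, h4, h5⟩; exact ⟨h1, by omega, by omega⟩
  · rintro ⟨h1, ⟨h2, h3⟩, h4, h5⟩; exact ⟨h1, ⟨by omega, by omega⟩, by omega, by omega⟩

lemma card_nbrF (x : ℤ × ℤ) : (nbrF x).card = 8 := by
  rw [nbrF, Finset.card_erase_of_mem (by simp [Finset.mem_product])]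
  rw [Finset.card_product]
  have h1 : x.1 + 1 + 1 - (x.1 - 1) = 3 := by ring
  have h2 : x.2 + 1 + 1 - (x.2 - 1) = 3 := by ring
  simp [Int.card_Icc, h1, h2]

lemma nbrCount_eq (S : Set (ℤ × ℤ)) (x : ℤ × ℤ) [DecidablePred (· ∈ S)] :
    nbrCount S x = ((nbrF x).filter (· ∈ S)).card := by
  rw [nbrCount, ← Set.ncard_coe_finset]
  congr 1
  ext y
  simp [mem_nbrF, and_comm]

lemma nbrCount_compl (S : Set (ℤ × ℤ)) (x : ℤ × ℤ) [DecidablePred (· ∈ S)]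
    [DecidablePred (· ∈ Sᶜ)] :
    ((nbrF x).filter (· ∈ Sᶜ)).card = 8 - nbrCount S x := by
  have h1 : (nbrF x).filter (· ∈ Sᶜ) = (nbrF x).filter (fun a => ¬ a ∈ S) :=
    Finset.filter_congr (fun z _ => by simp)
  have h2 := Finset.card_filter_add_card_filter_not (s := nbrF x) (p := (· ∈ S))
  rw [card_nbrF] at h2
  rw [nbrCount_eq, h1]
  omega

lemma nbrCount_le_8 (S : Set (ℤ × ℤ)) (x : ℤ × ℤ) : nbrCount S x ≤ 8 := by
  rw [nbrCount_eq]
  calc ((nbrF x).filter (· ∈ S)).card ≤ (nbrF x).card := Finset.card_filter_le _ _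
  _ = 8 := card_nbrF x



lemma isNbr_shift (x y v : ℤ × ℤ) :
    IsNbr (x.1 + v.1, x.2 + v.2) (y.1 + v.1, y.2 + v.2) ↔ IsNbr x y := by
  simp only [IsNbr, ne_eq, Prod.ext_iff, abs_le]
  omega

section Per
variable {S : Set (ℤ × ℤ)} {p q : ℤ}

lemma shift_mem (hp : ∀ x : ℤ × ℤ, x ∈ S ↔ (x.1 + p, x.2) ∈ S)
    (hq : ∀ x : ℤ × ℤ, x ∈ S ↔ (x.1, x.2 + q) ∈ S) (k l : ℤ) (x : ℤ × ℤ) :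
    x ∈ S ↔ (x.1 + k * p, x.2 + l * q) ∈ S := by
  have h1 : ∀ k : ℤ, ∀ x : ℤ × ℤ, x ∈ S ↔ (x.1 + k * p, x.2) ∈ S := by
    intro k
    induction k using Int.induction_on with
    | zero => simp
    | succ k ih =>
      intro x
      have h : x.1 + ((k : ℤ) + 1) * p = x.1 + k * p + p := by ring
      rw [h]; exact (ih x).trans (hp _)
    | pred k ih =>
      intro x
      have h : x.1 + (-(k : ℤ)) * p = x.1 + (-(k:ℤ) - 1) * p + p := by ring
      rw [(ih x), h]; exact (hp (x.1 + (-(k:ℤ)-1)*p, x.2)).symm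
  have h2 : ∀ l : ℤ, ∀ x : ℤ × ℤ, x ∈ S ↔ (x.1, x.2 + l * q) ∈ S := by
    intro l
    induction l using Int.induction_on with
    | zero => simp
    | succ l ih =>
      intro x
      have h : x.2 + ((l : ℤ) + 1) * q = x.2 + l * q + q := by ring
      rw [h]; exact (ih x).trans (hq _)
    | pred l ih =>
      intro x
      have h : x.2 + (-(l : ℤ)) * q = x.2 + (-(l:ℤ) - 1) * q + q := by ring
      rw [(ih x), h]; exact (hq (x.1, x.2 + (-(l:ℤ)-1)*q)).symm
  exact (h1 k x).trans (h2 l (x.1 + k * p, x.2))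

lemma res_mem (hp : ∀ x : ℤ × ℤ, x ∈ S ↔ (x.1 + p, x.2) ∈ S)
    (hq : ∀ x : ℤ × ℤ, x ∈ S ↔ (x.1, x.2 + q) ∈ S) (x : ℤ × ℤ) :
    x ∈ S ↔ (x.1 % p, x.2 % q) ∈ S := by
  have h1 : x.1 % p = x.1 + (-(x.1 / p)) * p := by
    linear_combination Int.mul_ediv_add_emod x.1 p
  have h2 : x.2 % q = x.2 + (-(x.2 / q)) * q := by
    linear_combination Int.mul_ediv_add_emod x.2 q
  rw [h1, h2]
  exact shift_mem hp hq _ _ x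

lemma nbrCount_shift (v : ℤ × ℤ) (hv : ∀ y : ℤ × ℤ, y ∈ S ↔ (y.1 + v.1, y.2 + v.2) ∈ S)
    (x : ℤ × ℤ) : nbrCount S (x.1 + v.1, x.2 + v.2) = nbrCount S x := by
  unfold nbrCount
  have himg : {y ∈ S | IsNbr (x.1 + v.1, x.2 + v.2) y}
      = (fun y : ℤ × ℤ => (y.1 + v.1, y.2 + v.2)) '' {y ∈ S | IsNbr x y} := by
    ext z
    constructor
    · rintro ⟨hz, hnb⟩
      refine ⟨(z.1 - v.1, z.2 - v.2), ⟨?_, ?_⟩, by simp⟩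
      · rw [hv (z.1 - v.1, z.2 - v.2)]; simpa using hz
      · have := isNbr_shift x (z.1 - v.1, z.2 - v.2) v
        simp only at this
        rw [← this]
        convert hnb using 2 <;> simp
    · rintro ⟨y, ⟨hy, hnb⟩, rfl⟩
      exact ⟨(hv y).1 hy, (isNbr_shift x y v).2 hnb⟩
  rw [himg, Set.ncard_image_of_injective]
  intro a b h
  simp only [Prod.ext_iff] at h ⊢
  omega

lemma nbrCount_res (hp : ∀ x : ℤ × ℤ, x ∈ S ↔ (x.1 + p, x.2) ∈ S)
    (hq : ∀ x : ℤ × ℤ, x ∈ S ↔ (x.1, x.2 + q) ∈ S) (x : ℤ × ℤ) :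
    nbrCount S (x.1 % p, x.2 % q) = nbrCount S x := by
  have h1 : x.1 % p = x.1 + (-(x.1 / p)) * p := by
    linear_combination Int.mul_ediv_add_emod x.1 p
  have h2 : x.2 % q = x.2 + (-(x.2 / q)) * q := by
    linear_combination Int.mul_ediv_add_emod x.2 q
  rw [h1, h2]
  exact nbrCount_shift (-(x.1 / p) * p, -(x.2 / q) * q)
    (fun y => shift_mem hp hq _ _ y) x

end Per




section Edge
variable {p q : ℤ}

lemma emod_shift (hp0 : 0 < p) {a : ℤ} (b : ℤ) (h1 : 0 ≤ a) (h2 : a < p) :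
    (b % p + a - b) % p = a := by
  have h : b % p + a - b = a + (-(b / p)) * p := by linear_combination Int.mul_ediv_add_emod b p
  rw [h, Int.add_mul_emod_self_right, Int.emod_eq_of_lt h1 h2]

lemma aux_mem {A B : Set (ℤ × ℤ)} (hpA : ∀ x : ℤ × ℤ, x ∈ A ↔ (x.1 + p, x.2) ∈ A)
    (hqA : ∀ x : ℤ × ℤ, x ∈ A ↔ (x.1, x.2 + q) ∈ A)
    (hpB : ∀ x : ℤ × ℤ, x ∈ B ↔ (x.1 + p, x.2) ∈ B)
    (hqB : ∀ x : ℤ × ℤ, x ∈ B ↔ (x.1, x.2 + q) ∈ B)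
    (hp0 : 0 < p) (hq0 : 0 < q) {x y : ℤ × ℤ}
    (hx : x ∈ Finset.Ico (0:ℤ) p ×ˢ Finset.Ico (0:ℤ) q) (hxA : x ∈ A)
    (hy : y ∈ nbrF x) (hyB : y ∈ B) :
    ((y.1 % p, y.2 % q) ∈ Finset.Ico (0:ℤ) p ×ˢ Finset.Ico (0:ℤ) q ∧ (y.1 % p, y.2 % q) ∈ B)
    ∧ ((y.1 % p + x.1 - y.1, y.2 % q + x.2 - y.2) ∈ nbrF (y.1 % p, y.2 % q)
       ∧ (y.1 % p + x.1 - y.1, y.2 % q + x.2 - y.2) ∈ A) := by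
  refine ⟨⟨?_, ?_⟩, ?_, ?_⟩
  · simp only [Finset.mem_product, Finset.mem_Ico]
    exact ⟨⟨Int.emod_nonneg _ hp0.ne', Int.emod_lt_of_pos _ hp0⟩,
      ⟨Int.emod_nonneg _ hq0.ne', Int.emod_lt_of_pos _ hq0⟩⟩
  · have h := shift_mem hpB hqB (-(y.1 / p)) (-(y.2 / q)) y
    have e1 : y.1 + (-(y.1 / p)) * p = y.1 % p := by linear_combination -Int.mul_ediv_add_emod y.1 p
    have e2 : y.2 + (-(y.2 / q)) * q = y.2 % q := by linear_combination -Int.mul_ediv_add_emod y.2 q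
    rw [e1, e2] at h
    exact h.1 hyB
  · rw [mem_nbrF] at hy ⊢
    simp only [IsNbr, ne_eq, Prod.ext_iff, abs_le] at hy ⊢
    omega
  · have h := shift_mem hpA hqA (-(y.1 / p)) (-(y.2 / q)) x
    have e1 : x.1 + (-(y.1 / p)) * p = y.1 % p + x.1 - y.1 := by
      linear_combination -Int.mul_ediv_add_emod y.1 p
    have e2 : x.2 + (-(y.2 / q)) * q = y.2 % q + x.2 - y.2 := by
      linear_combination -Int.mul_ediv_add_emod y.2 q
    rw [e1, e2] at h
    exact h.1 hxA

lemma edge_symm (A B : Set (ℤ × ℤ)) [DecidablePred (· ∈ A)] [DecidablePred (· ∈ B)] (hpA : ∀ x : ℤ × ℤ, x ∈ A ↔ (x.1 + p, x.2) ∈ A)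
    (hqA : ∀ x : ℤ × ℤ, x ∈ A ↔ (x.1, x.2 + q) ∈ A)
    (hpB : ∀ x : ℤ × ℤ, x ∈ B ↔ (x.1 + p, x.2) ∈ B)
    (hqB : ∀ x : ℤ × ℤ, x ∈ B ↔ (x.1, x.2 + q) ∈ B)
    (hp0 : 0 < p) (hq0 : 0 < q) :
    ∑ x ∈ (Finset.Ico (0:ℤ) p ×ˢ Finset.Ico (0:ℤ) q).filter (· ∈ A),
        ((nbrF x).filter (· ∈ B)).card
    = ∑ y ∈ (Finset.Ico (0:ℤ) p ×ˢ Finset.Ico (0:ℤ) q).filter (· ∈ B),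
        ((nbrF y).filter (· ∈ A)).card := by
  rw [← Finset.card_sigma, ← Finset.card_sigma]
  apply Finset.card_nbij'
    (i := fun a => ⟨(a.2.1 % p, a.2.2 % q), (a.2.1 % p + a.1.1 - a.2.1, a.2.2 % q + a.1.2 - a.2.2)⟩)
    (j := fun a => ⟨(a.2.1 % p, a.2.2 % q), (a.2.1 % p + a.1.1 - a.2.1, a.2.2 % q + a.1.2 - a.2.2)⟩)
  · intro a ha
    simp only [Finset.mem_coe, Finset.mem_sigma, Finset.mem_filter] at ha ⊢
    obtain ⟨⟨haD, haA⟩, hnb, hB⟩ := ha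
    obtain ⟨⟨d1, d2⟩, d3, d4⟩ := aux_mem hpA hqA hpB hqB hp0 hq0 haD haA hnb hB
    exact ⟨⟨d1, d2⟩, d3, d4⟩
  · intro a ha
    simp only [Finset.mem_coe, Finset.mem_sigma, Finset.mem_filter] at ha ⊢
    obtain ⟨⟨haD, haB⟩, hnb, hA⟩ := ha
    obtain ⟨⟨d1, d2⟩, d3, d4⟩ := aux_mem hpB hqB hpA hqA hp0 hq0 haD haB hnb hA
    exact ⟨⟨d1, d2⟩, d3, d4⟩
  · intro a ha
    simp only [Finset.mem_coe, Finset.mem_sigma, Finset.mem_filter, Finset.mem_product, Finset.mem_Ico] at ha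
    obtain ⟨⟨⟨⟨hb1, hb2⟩, hb3, hb4⟩, -⟩, -⟩ := ha
    have m1 : (a.2.1 % p + a.1.1 - a.2.1) % p = a.1.1 := emod_shift hp0 _ hb1 hb2
    have m2 : (a.2.2 % q + a.1.2 - a.2.2) % q = a.1.2 := emod_shift hq0 _ hb3 hb4
    refine Sigma.ext (Prod.ext m1 m2) (heq_of_eq (Prod.ext ?_ ?_))
    · show (a.2.1 % p + a.1.1 - a.2.1) % p + a.2.1 % p - (a.2.1 % p + a.1.1 - a.2.1) = a.2.1
      rw [m1]; ring
    · show (a.2.2 % q + a.1.2 - a.2.2) % q + a.2.2 % q - (a.2.2 % q + a.1.2 - a.2.2) = a.2.2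
      rw [m2]; ring
  · intro a ha
    simp only [Finset.mem_coe, Finset.mem_sigma, Finset.mem_filter, Finset.mem_product, Finset.mem_Ico] at ha
    obtain ⟨⟨⟨⟨hb1, hb2⟩, hb3, hb4⟩, -⟩, -⟩ := ha
    have m1 : (a.2.1 % p + a.1.1 - a.2.1) % p = a.1.1 := emod_shift hp0 _ hb1 hb2
    have m2 : (a.2.2 % q + a.1.2 - a.2.2) % q = a.1.2 := emod_shift hq0 _ hb3 hb4
    refine Sigma.ext (Prod.ext m1 m2) (heq_of_eq (Prod.ext ?_ ?_))
    · show (a.2.1 % p + a.1.1 - a.2.1) % p + a.2.1 % p - (a.2.1 % p + a.1.1 - a.2.1) = a.2.1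
      rw [m1]; ring
    · show (a.2.2 % q + a.1.2 - a.2.2) % q + a.2.2 % q - (a.2.2 % q + a.1.2 - a.2.2) = a.2.2
      rw [m2]; ring

end Edge


noncomputable def cnt (p a : ℤ) (r : ℕ) : ℕ :=
  ((Finset.Ico (1 - (r:ℤ)) (r:ℤ)).filter (fun x => x % p = a)).card

lemma ediv_facts {p u : ℤ} (hp0 : 0 < p) : p * (u / p) ≤ u ∧ u - p < p * (u / p) := by
  constructor
  · have := Int.ediv_mul_le u hp0.ne'
    linarith [mul_comm (u / p) p]
  · have := Int.lt_ediv_add_one_mul_self u hp0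
    have h2 : (u / p + 1) * p = p * (u / p) + p := by ring
    omega

lemma cnt_le {p a : ℤ} (hp0 : 0 < p) {r : ℕ} (hr : 1 ≤ r) :
    (p : ℤ) * cnt p a r ≤ 2 * (r:ℤ) - 1 + 2 * p := by
  set L : ℤ := 1 - (r:ℤ) with hL
  set k1 : ℤ := (L - a) / p with hk1
  set k2 : ℤ := ((r:ℤ) - 1 - a) / p with hk2
  have hk12 : k1 ≤ k2 := Int.ediv_le_ediv hp0 (by omega)
  have hcard : cnt p a r ≤ (k2 + 1 - k1).toNat := by
    rw [cnt, ← Int.card_Ico k1 (k2 + 1)]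
    apply Finset.card_le_card_of_injOn (fun x => (x - a) / p)
    · intro x hx
      simp only [Finset.mem_coe, Finset.mem_filter, Finset.mem_Ico] at hx ⊢
      refine ⟨Int.ediv_le_ediv hp0 (by omega), by
        have := Int.ediv_le_ediv hp0 (show x - a ≤ (r:ℤ) - 1 - a by omega); omega⟩
    · intro x hx y hy hxy
      simp only [Finset.coe_filter, Set.mem_setOf_eq, Finset.mem_Ico] at hx hy
      have hap : a % p = a := by
        conv_lhs => rw [← hx.2]
        rw [Int.emod_emod_of_dvd _ dvd_rfl, hx.2]
      have hax : (x - a) % p = 0 := by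
        rw [Int.sub_emod, hx.2, hap, sub_self, Int.zero_emod]
      have hay : (y - a) % p = 0 := by
        rw [Int.sub_emod, hy.2, hap, sub_self, Int.zero_emod]
      have ex := Int.mul_ediv_add_emod (x - a) p
      have ey := Int.mul_ediv_add_emod (y - a) p
      rw [hax] at ex; rw [hay] at ey
      simp only at hxy
      have : p * ((x - a) / p) = p * ((y - a) / p) := by rw [hxy]
      omega
  have hc : (cnt p a r : ℤ) ≤ k2 + 1 - k1 := by
    have := Int.toNat_of_nonneg (show (0:ℤ) ≤ k2 + 1 - k1 by omega)
    omega
  have hmul : (p:ℤ) * cnt p a r ≤ p * (k2 + 1 - k1) := mul_le_mul_of_nonneg_left hc hp0.le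
  have e2 := (ediv_facts (u := (r:ℤ) - 1 - a) hp0).1
  have e1 := (ediv_facts (u := L - a) hp0).2
  have hexp : p * (k2 + 1 - k1) = p * k2 - p * k1 + p := by ring
  rw [← hk2] at e2
  rw [← hk1] at e1
  omega

lemma cnt_ge {p a : ℤ} (hp0 : 0 < p) (ha0 : 0 ≤ a) (hap : a < p) {r : ℕ} (hr : 1 ≤ r) :
    2 * (r:ℤ) - 1 - 2 * p ≤ (p : ℤ) * cnt p a r := by
  set L : ℤ := 1 - (r:ℤ) with hL
  set k1 : ℤ := (L - a) / p + 1 with hk1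
  set k2 : ℤ := ((r:ℤ) - 1 - a) / p with hk2
  have e1 := (ediv_facts (u := L - a) hp0).2
  have e1' := (ediv_facts (u := L - a) hp0).1
  have e2 := (ediv_facts (u := (r:ℤ) - 1 - a) hp0).1
  have e2' := (ediv_facts (u := (r:ℤ) - 1 - a) hp0).2
  have hcard : (k2 + 1 - k1).toNat ≤ cnt p a r := by
    rw [cnt, ← Int.card_Ico k1 (k2 + 1)]
    apply Finset.card_le_card_of_injOn (fun k => a + k * p)
    · intro k hk
      simp only [Finset.mem_coe, Finset.mem_Ico] at hk
      simp only [Finset.mem_coe, Finset.mem_filter, Finset.mem_Ico]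
      have hb1 : L - a < k1 * p := by
        have : k1 * p = p * ((L - a) / p) + p := by rw [hk1]; ring
        omega
      have hb2 : k2 * p ≤ (r:ℤ) - 1 - a := by
        have : k2 * p = p * (((r:ℤ) - 1 - a) / p) := by rw [hk2]; ring
        omega
      have hm1 : k1 * p ≤ k * p := mul_le_mul_of_nonneg_right hk.1 hp0.le
      have hm2 : k * p ≤ k2 * p := mul_le_mul_of_nonneg_right (by omega) hp0.le
      refine ⟨⟨by omega, by omega⟩, ?_⟩
      rw [Int.add_mul_emod_self_right, Int.emod_eq_of_lt ha0 hap]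
    · intro x hx y hy hxy
      simp only at hxy
      have : x * p = y * p := by omega
      exact mul_right_cancel₀ hp0.ne' this
  have hc : k2 + 1 - k1 ≤ (cnt p a r : ℤ) := by
    rcases le_or_gt (k2 + 1 - k1) 0 with h | h
    · have : (0:ℤ) ≤ cnt p a r := by positivity
      omega
    · have := Int.toNat_of_nonneg h.le
      omega
  have hk12 : p * (k2 + 1 - k1) ≤ p * cnt p a r := by
    rcases le_or_gt (k2 + 1 - k1) (cnt p a r : ℤ) with h | h
    · exact mul_le_mul_of_nonneg_left hc hp0.le
    · omega
  have hexp : p * (k2 + 1 - k1) = p * (((r:ℤ) - 1 - a) / p) - p * ((L - a) / p) := by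
    rw [hk1, hk2]; ring
  omega


lemma two_r_ne (r : ℕ) : (2 * (r:ℝ) - 1) ≠ 0 := by
  rcases Nat.eq_zero_or_pos r with h | h
  · subst h; norm_num
  · have : (1:ℝ) ≤ (r:ℝ) := by exact_mod_cast h
    linarith

lemma tendsto_two_r : Tendsto (fun r : ℕ => 2 * (r:ℝ) - 1) atTop atTop := by
  apply tendsto_atTop_add_const_right
  exact (tendsto_natCast_atTop_atTop (R := ℝ)).const_mul_atTop (by norm_num)

lemma cnt_tendsto {p a : ℤ} (hp0 : 0 < p) (ha0 : 0 ≤ a) (hap : a < p) :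
    Tendsto (fun r : ℕ => (cnt p a r : ℝ) / (2 * (r:ℝ) - 1)) atTop (𝓝 (1 / (p:ℝ))) := by
  have hP : (0:ℝ) < (p:ℝ) := by exact_mod_cast hp0
  have hinv : Tendsto (fun r : ℕ => (2 * (r:ℝ) - 1)⁻¹) atTop (𝓝 0) :=
    tendsto_two_r.inv_tendsto_atTop
  have hg : Tendsto (fun r : ℕ => 1 / (p:ℝ) - 2 * (2 * (r:ℝ) - 1)⁻¹) atTop (𝓝 (1 / (p:ℝ))) := by
    have := tendsto_const_nhds (x := 1 / (p:ℝ)) (f := atTop (α := ℕ))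
    have h2 : Tendsto (fun r : ℕ => 2 * (2 * (r:ℝ) - 1)⁻¹) atTop (𝓝 0) := by
      simpa using hinv.const_mul (2:ℝ)
    simpa using this.sub h2
  have hh : Tendsto (fun r : ℕ => 1 / (p:ℝ) + 2 * (2 * (r:ℝ) - 1)⁻¹) atTop (𝓝 (1 / (p:ℝ))) := by
    have := tendsto_const_nhds (x := 1 / (p:ℝ)) (f := atTop (α := ℕ))
    have h2 : Tendsto (fun r : ℕ => 2 * (2 * (r:ℝ) - 1)⁻¹) atTop (𝓝 0) := by
      simpa using hinv.const_mul (2:ℝ)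
    simpa using this.add h2
  apply tendsto_of_tendsto_of_tendsto_of_le_of_le' hg hh
  · filter_upwards [eventually_ge_atTop 1] with r hr
    have hR : (0:ℝ) < 2 * (r:ℝ) - 1 := by
      have : (1:ℝ) ≤ (r:ℝ) := by exact_mod_cast hr
      linarith
    have hb : 2 * (r:ℝ) - 1 - 2 * p ≤ (p:ℝ) * cnt p a r := by
      have := cnt_ge hp0 ha0 hap hr
      exact_mod_cast this
    have heq : 1 / (p:ℝ) - 2 * (2 * (r:ℝ) - 1)⁻¹
        = (2 * (r:ℝ) - 1 - 2 * p) / ((p:ℝ) * (2 * (r:ℝ) - 1)) := by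
      field_simp
      try ring
    rw [heq, div_le_div_iff₀ (by positivity) hR]
    calc (2 * (r:ℝ) - 1 - 2 * p) * (2 * (r:ℝ) - 1)
        ≤ ((p:ℝ) * cnt p a r) * (2 * (r:ℝ) - 1) := mul_le_mul_of_nonneg_right hb hR.le
      _ = (cnt p a r : ℝ) * ((p:ℝ) * (2 * (r:ℝ) - 1)) := by ring
  · filter_upwards [eventually_ge_atTop 1] with r hr
    have hR : (0:ℝ) < 2 * (r:ℝ) - 1 := by
      have : (1:ℝ) ≤ (r:ℝ) := by exact_mod_cast hr
      linarith
    have hb : (p:ℝ) * cnt p a r ≤ 2 * (r:ℝ) - 1 + 2 * p := by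
      have := cnt_le hp0 (a := a) hr
      exact_mod_cast this
    have heq : 1 / (p:ℝ) + 2 * (2 * (r:ℝ) - 1)⁻¹
        = (2 * (r:ℝ) - 1 + 2 * p) / ((p:ℝ) * (2 * (r:ℝ) - 1)) := by
      field_simp
      try ring
    rw [heq, div_le_div_iff₀ hR (by positivity)]
    calc (cnt p a r : ℝ) * ((p:ℝ) * (2 * (r:ℝ) - 1))
        = ((p:ℝ) * cnt p a r) * (2 * (r:ℝ) - 1) := by ring
      _ ≤ (2 * (r:ℝ) - 1 + 2 * p) * (2 * (r:ℝ) - 1) := mul_le_mul_of_nonneg_right hb hR.le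


lemma box_count {S : Set (ℤ × ℤ)} [DecidablePred (· ∈ S)] {p q : ℤ} (hp0 : 0 < p) (hq0 : 0 < q)
    (hp : ∀ x : ℤ × ℤ, x ∈ S ↔ (x.1 + p, x.2) ∈ S)
    (hq : ∀ x : ℤ × ℤ, x ∈ S ↔ (x.1, x.2 + q) ∈ S) (r : ℕ) :
    Set.ncard (S ∩ {x : ℤ × ℤ | |x.1| < (r:ℤ) ∧ |x.2| < (r:ℤ)}) =
      ∑ ab ∈ (Finset.Ico (0:ℤ) p ×ˢ Finset.Ico (0:ℤ) q).filter (· ∈ S),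
        cnt p ab.1 r * cnt q ab.2 r := by
  have h1 : S ∩ {x : ℤ × ℤ | |x.1| < (r:ℤ) ∧ |x.2| < (r:ℤ)}
      = ↑(((Finset.Ico (1 - (r:ℤ)) (r:ℤ)) ×ˢ (Finset.Ico (1 - (r:ℤ)) (r:ℤ))).filter (· ∈ S)) := by
    ext z
    simp only [Set.mem_inter_iff, Set.mem_setOf_eq, Finset.coe_filter, Finset.mem_product,
      Finset.mem_Ico, abs_lt]
    constructor
    · rintro ⟨hS, ⟨a1, a2⟩, b1, b2⟩
      exact ⟨⟨⟨by omega, by omega⟩, by omega, by omega⟩, hS⟩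
    · rintro ⟨⟨⟨a1, a2⟩, b1, b2⟩, hS⟩
      exact ⟨hS, ⟨by omega, by omega⟩, by omega, by omega⟩
  rw [h1, Set.ncard_coe_finset]
  rw [Finset.card_eq_sum_card_fiberwise
    (f := fun z : ℤ × ℤ => (z.1 % p, z.2 % q))
    (t := (Finset.Ico (0:ℤ) p ×ˢ Finset.Ico (0:ℤ) q).filter (· ∈ S))
    (fun z hz => by
      simp only [Finset.mem_coe, Finset.mem_filter, Finset.mem_product, Finset.mem_Ico] at hz ⊢
      exact ⟨⟨⟨Int.emod_nonneg _ hp0.ne', Int.emod_lt_of_pos _ hp0⟩,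
        ⟨Int.emod_nonneg _ hq0.ne', Int.emod_lt_of_pos _ hq0⟩⟩, (res_mem hp hq z).1 hz.2⟩)]
  apply Finset.sum_congr rfl
  intro ab hab
  simp only [Finset.mem_filter, Finset.mem_product, Finset.mem_Ico] at hab
  have h2 : (((Finset.Ico (1 - (r:ℤ)) (r:ℤ)) ×ˢ (Finset.Ico (1 - (r:ℤ)) (r:ℤ))).filter
        (· ∈ S)).filter (fun z => (z.1 % p, z.2 % q) = ab)
      = ((Finset.Ico (1 - (r:ℤ)) (r:ℤ)) ×ˢ (Finset.Ico (1 - (r:ℤ)) (r:ℤ))).filter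
        (fun z => z.1 % p = ab.1 ∧ z.2 % q = ab.2) := by
    rw [Finset.filter_filter]
    apply Finset.filter_congr
    intro z hz
    simp only [Prod.ext_iff]
    constructor
    · rintro ⟨-, h⟩; exact h
    · rintro ⟨e1, e2⟩
      refine ⟨?_, e1, e2⟩
      rw [res_mem hp hq z]
      have : (z.1 % p, z.2 % q) = ab := Prod.ext e1 e2
      rw [this]
      exact hab.2
  rw [h2, Finset.filter_product (fun a => a % p = ab.1) (fun b => b % q = ab.2), Finset.card_product]
  rfl

lemma density_periodic {S : Set (ℤ × ℤ)} [DecidablePred (· ∈ S)] {p q : ℤ} (hp0 : 0 < p) (hq0 : 0 < q)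
    (hp : ∀ x : ℤ × ℤ, x ∈ S ↔ (x.1 + p, x.2) ∈ S)
    (hq : ∀ x : ℤ × ℤ, x ∈ S ↔ (x.1, x.2 + q) ∈ S) :
    Tendsto (fun r : ℕ =>
        (Set.ncard (S ∩ {x : ℤ × ℤ | |x.1| < (r:ℤ) ∧ |x.2| < (r:ℤ)}) : ℝ) / (2 * (r:ℝ) - 1) ^ 2)
      atTop (𝓝 ((((Finset.Ico (0:ℤ) p ×ˢ Finset.Ico (0:ℤ) q).filter (· ∈ S)).card : ℝ)
        / ((p : ℝ) * (q : ℝ)))) := by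
  set F := (Finset.Ico (0:ℤ) p ×ˢ Finset.Ico (0:ℤ) q).filter (· ∈ S) with hF
  have hsum : Tendsto (fun r : ℕ => ∑ ab ∈ F,
      ((cnt p ab.1 r : ℝ) / (2 * (r:ℝ) - 1)) * ((cnt q ab.2 r : ℝ) / (2 * (r:ℝ) - 1)))
      atTop (𝓝 (∑ _ab ∈ F, (1 / (p:ℝ)) * (1 / (q:ℝ)))) := by
    apply tendsto_finset_sum
    intro ab hab
    simp only [hF, Finset.mem_filter, Finset.mem_product, Finset.mem_Ico] at hab
    exact (cnt_tendsto hp0 hab.1.1.1 hab.1.1.2).mul (cnt_tendsto hq0 hab.1.2.1 hab.1.2.2)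
  have hval : (∑ _ab ∈ F, (1 / (p:ℝ)) * (1 / (q:ℝ))) = (F.card : ℝ) / ((p:ℝ) * (q:ℝ)) := by
    rw [Finset.sum_const, nsmul_eq_mul]
    rw [one_div_mul_one_div, mul_one_div]
  rw [hval] at hsum
  apply hsum.congr
  intro r
  rw [box_count hp0 hq0 hp hq r]
  push_cast
  rw [Finset.sum_div]
  apply Finset.sum_congr rfl
  intro ab _
  rw [div_mul_div_comm, ← sq]


theorem periodic_density_eq_iff (n : ℕ) (hn : n ≤ 8) (S : Set (ℤ × ℤ))
    (hper : Periodic S) (hdeg : ∀ x ∈ S, nbrCount S x ≤ n) :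
    HasDensity S (8 / (16 - (n : ℝ))) ↔
      (∀ y ∉ S, nbrCount S y = 8) ∧ (∀ x ∈ S, nbrCount S x = n) := by
  obtain ⟨p, q, hp0, hq0, hp, hq⟩ := hper
  set D := Finset.Ico (0:ℤ) p ×ˢ Finset.Ico (0:ℤ) q with hD
  set DS := D.filter (· ∈ S) with hDS
  set DT := D.filter (· ∈ Sᶜ) with hDT
  -- the density of S
  have hdd : HasDensity S ((DS.card : ℝ) / ((p:ℝ) * (q:ℝ))) := by
    unfold HasDensity box
    exact density_periodic hp0 hq0 hp hq
  -- periodicity of the complement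
  have hpc : ∀ x : ℤ × ℤ, x ∈ Sᶜ ↔ (x.1 + p, x.2) ∈ Sᶜ := fun x => by
    simp only [Set.mem_compl_iff]; exact not_congr (hp x)
  have hqc : ∀ x : ℤ × ℤ, x ∈ Sᶜ ↔ (x.1, x.2 + q) ∈ Sᶜ := fun x => by
    simp only [Set.mem_compl_iff]; exact not_congr (hq x)
  -- edge double counting
  have hedge := edge_symm S Sᶜ hp hq hpc hqc hp0 hq0
  have hsum1 : ∑ x ∈ DS, (8 - nbrCount S x) = ∑ y ∈ DT, nbrCount S y := by
    rw [hDS, hDT, hD]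
    calc ∑ x ∈ (Finset.Ico (0:ℤ) p ×ˢ Finset.Ico (0:ℤ) q).filter (· ∈ S), (8 - nbrCount S x)
        = ∑ x ∈ (Finset.Ico (0:ℤ) p ×ˢ Finset.Ico (0:ℤ) q).filter (· ∈ S),
            ((nbrF x).filter (· ∈ Sᶜ)).card :=
          Finset.sum_congr rfl (fun x _ => (nbrCount_compl S x).symm)
      _ = ∑ y ∈ (Finset.Ico (0:ℤ) p ×ˢ Finset.Ico (0:ℤ) q).filter (· ∈ Sᶜ),
            ((nbrF y).filter (· ∈ S)).card := hedge
      _ = ∑ y ∈ (Finset.Ico (0:ℤ) p ×ˢ Finset.Ico (0:ℤ) q).filter (· ∈ Sᶜ),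
            nbrCount S y := Finset.sum_congr rfl (fun y _ => (nbrCount_eq S y).symm)
  -- cardinalities
  have hcards : DS.card + DT.card = p.toNat * q.toNat := by
    have h1 : DT = D.filter (fun a => ¬ a ∈ S) := by
      rw [hDT]
      exact Finset.filter_congr (fun z _ => by simp)
    have h2 := Finset.card_filter_add_card_filter_not (s := D) (p := (· ∈ S))
    have h3 : D.card = p.toNat * q.toNat := by
      rw [hD, Finset.card_product]
      simp [Int.card_Ico]
    rw [h1, ← hDS] at *
    omega
  have hPQpos : 0 < p.toNat * q.toNat := by
    have h1 : 0 < p.toNat := by omega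
    have h2 : 0 < q.toNat := by omega
    positivity
  have h16 : (0:ℝ) < 16 - (n:ℝ) := by
    have : (n:ℝ) ≤ 8 := by exact_mod_cast hn
    linarith
  have hpqR : (0:ℝ) < (p:ℝ) * (q:ℝ) := by
    have h1 : (0:ℝ) < (p:ℝ) := by exact_mod_cast hp0
    have h2 : (0:ℝ) < (q:ℝ) := by exact_mod_cast hq0
    positivity
  have hcast : ((p.toNat * q.toNat : ℕ) : ℝ) = (p:ℝ) * (q:ℝ) := by
    have e1 : ((p.toNat : ℤ) : ℝ) = (p:ℝ) := by
      exact_mod_cast congrArg (fun z : ℤ => (z : ℝ)) (Int.toNat_of_nonneg hp0.le)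
    have e2 : ((q.toNat : ℤ) : ℝ) = (q:ℝ) := by
      exact_mod_cast congrArg (fun z : ℤ => (z : ℝ)) (Int.toNat_of_nonneg hq0.le)
    push_cast at e1 e2 ⊢
    rw [e1, e2]
  have hcast16 : ((16 - n : ℕ) : ℝ) = 16 - (n:ℝ) := by
    have h1 : n ≤ 16 := by omega
    push_cast [h1]
    ring
  have hsplit : DS.card * (16 - n) = DS.card * (8 - n) + 8 * DS.card := by
    rw [show 16 - n = (8 - n) + 8 from by omega, Nat.mul_add]
    ring
  -- the key real/nat equivalence
  have hiff2 : (8:ℝ) / (16 - (n:ℝ)) = (DS.card : ℝ) / ((p:ℝ) * (q:ℝ)) ↔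
      8 * (p.toNat * q.toNat) = DS.card * (16 - n) := by
    rw [div_eq_div_iff h16.ne' hpqR.ne']
    constructor
    · intro h
      have hr : (8:ℝ) * ((p.toNat * q.toNat : ℕ) : ℝ) = (DS.card : ℝ) * ((16 - n : ℕ) : ℝ) := by
        rw [hcast, hcast16]
        exact h
      exact_mod_cast hr
    · intro h
      have hr : (8:ℝ) * ((p.toNat * q.toNat : ℕ) : ℝ) = (DS.card : ℝ) * ((16 - n : ℕ) : ℝ) := by
        exact_mod_cast h
      rw [hcast, hcast16] at hr
      exact hr
  have hmemDT : ∀ y ∈ DT, y ∉ S := by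
    intro y hy
    rw [hDT, Finset.mem_filter] at hy
    exact hy.2
  have hmemDS : ∀ x ∈ DS, x ∈ S := by
    intro x hx
    rw [hDS, Finset.mem_filter] at hx
    exact hx.2
  constructor
  · -- forward direction
    intro hden
    have heq := tendsto_nhds_unique hden hdd
    have hnat : 8 * (p.toNat * q.toNat) = DS.card * (16 - n) := hiff2.1 heq
    have h8t : DS.card * (8 - n) = 8 * DT.card := by omega
    have hle1 : ∀ x ∈ DS, 8 - n ≤ 8 - nbrCount S x := by
      intro x hx
      have := hdeg x (hmemDS x hx)
      omega
    have hle2 : ∀ y ∈ DT, nbrCount S y ≤ 8 := fun y _ => nbrCount_le_8 S y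
    have hE1 : ∑ x ∈ DS, (8 - n) ≤ ∑ x ∈ DS, (8 - nbrCount S x) := Finset.sum_le_sum hle1
    have hE2 : ∑ y ∈ DT, nbrCount S y ≤ ∑ y ∈ DT, 8 := Finset.sum_le_sum hle2
    rw [Finset.sum_const, smul_eq_mul] at hE1 hE2
    have hconst1 : ∑ x ∈ DS, (8 - n) = DS.card * (8 - n) := by
      rw [Finset.sum_const, smul_eq_mul]
    have hconst2 : ∑ y ∈ DT, (8:ℕ) = DT.card * 8 := by
      rw [Finset.sum_const, smul_eq_mul]
    -- all inequalities are equalities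
    have hEeq1 : ∑ x ∈ DS, (8 - n) = ∑ x ∈ DS, (8 - nbrCount S x) := by omega
    have hEeq2 : ∑ y ∈ DT, nbrCount S y = ∑ y ∈ DT, (8:ℕ) := by omega
    have hptx : ∀ x ∈ DS, nbrCount S x = n := by
      intro x hx
      have h1 := (Finset.sum_eq_sum_iff_of_le hle1).1 hEeq1 x hx
      have h2 := nbrCount_le_8 S x
      have h3 := hdeg x (hmemDS x hx)
      omega
    have hpty : ∀ y ∈ DT, nbrCount S y = 8 := fun y hy =>
      (Finset.sum_eq_sum_iff_of_le hle2).1 hEeq2 y hy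
    constructor
    · intro y hyS
      have hres := res_mem hp hq y
      have hmemD : (y.1 % p, y.2 % q) ∈ D := by
        rw [hD]
        simp only [Finset.mem_product, Finset.mem_Ico]
        exact ⟨⟨Int.emod_nonneg _ hp0.ne', Int.emod_lt_of_pos _ hp0⟩,
          ⟨Int.emod_nonneg _ hq0.ne', Int.emod_lt_of_pos _ hq0⟩⟩
      have hmem : (y.1 % p, y.2 % q) ∈ DT := by
        rw [hDT, Finset.mem_filter]
        exact ⟨hmemD, fun hc => hyS (hres.2 hc)⟩
      rw [← nbrCount_res hp hq y]
      exact hpty _ hmem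
    · intro x hxS
      have hres := res_mem hp hq x
      have hmemD : (x.1 % p, x.2 % q) ∈ D := by
        rw [hD]
        simp only [Finset.mem_product, Finset.mem_Ico]
        exact ⟨⟨Int.emod_nonneg _ hp0.ne', Int.emod_lt_of_pos _ hp0⟩,
          ⟨Int.emod_nonneg _ hq0.ne', Int.emod_lt_of_pos _ hq0⟩⟩
      have hmem : (x.1 % p, x.2 % q) ∈ DS := by
        rw [hDS, Finset.mem_filter]
        exact ⟨hmemD, hres.1 hxS⟩
      rw [← nbrCount_res hp hq x]
      exact hptx _ hmem
  · -- backward direction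
    rintro ⟨h8', hn'⟩
    have hEeq1 : ∑ x ∈ DS, (8 - nbrCount S x) = DS.card * (8 - n) := by
      calc ∑ x ∈ DS, (8 - nbrCount S x) = ∑ x ∈ DS, (8 - n) :=
            Finset.sum_congr rfl (fun x hx => by rw [hn' x (hmemDS x hx)])
        _ = DS.card * (8 - n) := by rw [Finset.sum_const, smul_eq_mul]
    have hEeq2 : ∑ y ∈ DT, nbrCount S y = DT.card * 8 := by
      calc ∑ y ∈ DT, nbrCount S y = ∑ y ∈ DT, (8:ℕ) :=
            Finset.sum_congr rfl (fun y hy => by rw [h8' y (hmemDT y hy)])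
        _ = DT.card * 8 := by rw [Finset.sum_const, smul_eq_mul]
    have h8t : DS.card * (8 - n) = DT.card * 8 := by rw [← hEeq1, ← hEeq2, hsum1]
    have hnat : 8 * (p.toNat * q.toNat) = DS.card * (16 - n) := by omega
    rw [show (8:ℝ) / (16 - (n:ℝ)) = (DS.card : ℝ) / ((p:ℝ) * (q:ℝ)) from hiff2.2 hnat]
    exact hdd
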